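/- For every integer n ≥ 0 with n ≡ 0 (mod 3), the octonion product satisfies 49·(JO_n · jO_n) = (99 − 520·2^n − 349488·4^n)·e_0 + (2^{2n+6} + 7838·2^n + 36)·e_1 + (2^{2n+7} − 410·2^n − 12)·e_2 + (2^{2n+8} + 4864·2^n − 24)·e_3 + (2^{2n+9} + 3274·2^n + 36)·e_4 + (2^{2n+10} + 850·2^n − 12)·e_5 + (2^{2n+11} + 5424·2^n − 24)·e_6 + (2^{2n+12} − 4426·2^n + 36)·e_7. -/

import Mathlib

open Quaternion

noncomputable section

/-- The octonions, built from pairs of quaternions via the Cayley–Dickson construction. -/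
def Octonion : Type := ℍ[ℝ] × ℍ[ℝ]

namespace Octonion

instance : AddCommGroup Octonion := inferInstanceAs (AddCommGroup (ℍ[ℝ] × ℍ[ℝ]))
instance : Module ℝ Octonion := inferInstanceAs (Module ℝ (ℍ[ℝ] × ℍ[ℝ]))

instance : One Octonion := ⟨((1, 0) : ℍ[ℝ] × ℍ[ℝ])⟩

/-- Cayley–Dickson multiplication `(a,b)·(c,d) = (ac - d̄b, da + bc̄)`; this realizes the
standard octonion multiplication table (`e₁e₂ = e₃`, `e₁e₄ = e₅`, `e₂e₄ = e₆`,
`e₃e₄ = e₇`, `eₛ² = -1` for `1 ≤ s ≤ 7`, …). -/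
instance : Mul Octonion :=
  ⟨fun p q =>
    ((p : ℍ[ℝ] × ℍ[ℝ]).1 * (q : ℍ[ℝ] × ℍ[ℝ]).1
        - star (q : ℍ[ℝ] × ℍ[ℝ]).2 * (p : ℍ[ℝ] × ℍ[ℝ]).2,
      (q : ℍ[ℝ] × ℍ[ℝ]).2 * (p : ℍ[ℝ] × ℍ[ℝ]).1
        + (p : ℍ[ℝ] × ℍ[ℝ]).2 * star (q : ℍ[ℝ] × ℍ[ℝ]).1)⟩

/-- The standard basis `e₀ = 1, e₁, …, e₇` of the octonions. -/
def e : Fin 8 → Octonion :=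
  ![((1, 0) : ℍ[ℝ] × ℍ[ℝ]),
    ((⟨0, 1, 0, 0⟩, 0) : ℍ[ℝ] × ℍ[ℝ]),
    ((⟨0, 0, 1, 0⟩, 0) : ℍ[ℝ] × ℍ[ℝ]),
    ((⟨0, 0, 0, 1⟩, 0) : ℍ[ℝ] × ℍ[ℝ]),
    ((0, 1) : ℍ[ℝ] × ℍ[ℝ]),
    ((0, ⟨0, 1, 0, 0⟩) : ℍ[ℝ] × ℍ[ℝ]),
    ((0, ⟨0, 0, 1, 0⟩) : ℍ[ℝ] × ℍ[ℝ]),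
    ((0, ⟨0, 0, 0, 1⟩) : ℍ[ℝ] × ℍ[ℝ])]

end Octonion

/-- The third order Jacobsthal numbers: `J₀ = 0`, `J₁ = 1`, `J₂ = 1`,
`J_{n+3} = J_{n+2} + J_{n+1} + 2·J_n`. -/
def J3 : ℕ → ℕ
  | 0 => 0
  | 1 => 1
  | 2 => 1
  | n + 3 => J3 (n + 2) + J3 (n + 1) + 2 * J3 n

/-- The third order Jacobsthal–Lucas numbers: `j₀ = 2`, `j₁ = 1`, `j₂ = 5`,
`j_{n+3} = j_{n+2} + j_{n+1} + 2·j_n`. -/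
def j3 : ℕ → ℕ
  | 0 => 2
  | 1 => 1
  | 2 => 5
  | n + 3 => j3 (n + 2) + j3 (n + 1) + 2 * j3 n

/-- The `n`-th third order Jacobsthal octonion `JO_n = ∑_{s=0}^{7} J_{n+s} e_s`. -/
def JO (n : ℕ) : Octonion :=
  ∑ s : Fin 8, (J3 (n + (s : ℕ)) : ℝ) • Octonion.e s

/-- The `n`-th third order Jacobsthal–Lucas octonion `jO_n = ∑_{s=0}^{7} j_{n+s} e_s`. -/
def jO (n : ℕ) : Octonion :=
  ∑ s : Fin 8, (j3 (n + (s : ℕ)) : ℝ) • Octonion.e s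

/- ## Auxiliary lemmas -/

open Octonion in
/-- An explicit real linear combination of the basis octonions, as a pair of quaternions. -/
lemma octo_comb (a0 a1 a2 a3 a4 a5 a6 a7 : ℝ) :
    a0 • e 0 + a1 • e 1 + a2 • e 2 + a3 • e 3 + a4 • e 4 + a5 • e 5 + a6 • e 6 + a7 • e 7 =
      (((⟨a0, a1, a2, a3⟩ : ℍ[ℝ]), (⟨a4, a5, a6, a7⟩ : ℍ[ℝ])) : ℍ[ℝ] × ℍ[ℝ]) := by
  have h0 : e 0 = (((⟨1,0,0,0⟩ : ℍ[ℝ]), (⟨0,0,0,0⟩ : ℍ[ℝ])) : ℍ[ℝ] × ℍ[ℝ]) := rfl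
  have h1 : e 1 = (((⟨0,1,0,0⟩ : ℍ[ℝ]), (⟨0,0,0,0⟩ : ℍ[ℝ])) : ℍ[ℝ] × ℍ[ℝ]) := rfl
  have h2 : e 2 = (((⟨0,0,1,0⟩ : ℍ[ℝ]), (⟨0,0,0,0⟩ : ℍ[ℝ])) : ℍ[ℝ] × ℍ[ℝ]) := rfl
  have h3 : e 3 = (((⟨0,0,0,1⟩ : ℍ[ℝ]), (⟨0,0,0,0⟩ : ℍ[ℝ])) : ℍ[ℝ] × ℍ[ℝ]) := rfl
  have h4 : e 4 = (((⟨0,0,0,0⟩ : ℍ[ℝ]), (⟨1,0,0,0⟩ : ℍ[ℝ])) : ℍ[ℝ] × ℍ[ℝ]) := rfl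
  have h5 : e 5 = (((⟨0,0,0,0⟩ : ℍ[ℝ]), (⟨0,1,0,0⟩ : ℍ[ℝ])) : ℍ[ℝ] × ℍ[ℝ]) := rfl
  have h6 : e 6 = (((⟨0,0,0,0⟩ : ℍ[ℝ]), (⟨0,0,1,0⟩ : ℍ[ℝ])) : ℍ[ℝ] × ℍ[ℝ]) := rfl
  have h7 : e 7 = (((⟨0,0,0,0⟩ : ℍ[ℝ]), (⟨0,0,0,1⟩ : ℍ[ℝ])) : ℍ[ℝ] × ℍ[ℝ]) := rfl
  have hs : ∀ (r : ℝ) (p : Octonion), r • p = ((r • p.1, r • p.2) : ℍ[ℝ] × ℍ[ℝ]) :=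
    fun _ _ => rfl
  have ha : ∀ (p q : Octonion), p + q = ((p.1 + q.1, p.2 + q.2) : ℍ[ℝ] × ℍ[ℝ]) :=
    fun _ _ => rfl
  have hf1 : ∀ (p q : Octonion), (p + q).1 = p.1 + q.1 := fun _ _ => rfl
  have hf2 : ∀ (p q : Octonion), (p + q).2 = p.2 + q.2 := fun _ _ => rfl
  have hm1 : ∀ (r : ℝ) (p : Octonion), (r • p).1 = r • p.1 := fun _ _ => rfl
  have hm2 : ∀ (r : ℝ) (p : Octonion), (r • p).2 = r • p.2 := fun _ _ => rfl
  have hq0 : ∀ (r : ℝ) (q : ℍ[ℝ]), (r • q).re = r * q.re := fun _ _ => rfl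
  have hq1 : ∀ (r : ℝ) (q : ℍ[ℝ]), (r • q).imI = r * q.imI := fun _ _ => rfl
  have hq2 : ∀ (r : ℝ) (q : ℍ[ℝ]), (r • q).imJ = r * q.imJ := fun _ _ => rfl
  have hq3 : ∀ (r : ℝ) (q : ℍ[ℝ]), (r • q).imK = r * q.imK := fun _ _ => rfl
  refine Prod.ext (QuaternionAlgebra.ext ?_ ?_ ?_ ?_) (QuaternionAlgebra.ext ?_ ?_ ?_ ?_) <;>
  · simp only [hf1, hf2, hm1, hm2, Quaternion.re_add, Quaternion.imI_add, Quaternion.imJ_add,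
      Quaternion.imK_add, Quaternion.re_smul, Quaternion.imI_smul, Quaternion.imJ_smul,
      Quaternion.imK_smul]
    simp [e]

open Octonion in
lemma octo_sum_comb (a : Fin 8 → ℝ) :
    (∑ s : Fin 8, a s • e s) =
      (((⟨a 0, a 1, a 2, a 3⟩ : ℍ[ℝ]), (⟨a 4, a 5, a 6, a 7⟩ : ℍ[ℝ])) : ℍ[ℝ] × ℍ[ℝ]) := by
  rw [Fin.sum_univ_eight, octo_comb]

open Octonion in
lemma octo_mul_def (p q : Octonion) : p * q =
    ((p.1 * q.1 - star q.2 * p.2, q.2 * p.1 + p.2 * star q.1) : ℍ[ℝ] × ℍ[ℝ]) := rfl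

lemma J3_closed (k : ℕ) :
    ((J3 (3*k) : ℝ) = (2^(3*k+1) - 2)/7) ∧
    ((J3 (3*k+1) : ℝ) = (2^(3*k+2) + 3)/7) ∧
    ((J3 (3*k+2) : ℝ) = (2^(3*k+3) - 1)/7) := by
  induction k with
  | zero => norm_num [J3]
  | succ k ih =>
    obtain ⟨h0, h1, h2⟩ := ih
    have r3 : J3 (3*k+3) = J3 (3*k+2) + J3 (3*k+1) + 2 * J3 (3*k) := rfl
    have r4 : J3 (3*k+4) = J3 (3*k+3) + J3 (3*k+2) + 2 * J3 (3*k+1) := rfl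
    have r5 : J3 (3*k+5) = J3 (3*k+4) + J3 (3*k+3) + 2 * J3 (3*k+2) := rfl
    have h3 : (J3 (3*k+3) : ℝ) = (2^(3*k+4) - 2)/7 := by
      rw [r3]; push_cast; rw [h0, h1, h2]; ring
    have h4 : (J3 (3*k+4) : ℝ) = (2^(3*k+5) + 3)/7 := by
      rw [r4]; push_cast; rw [h3, h1, h2]; ring
    have h5 : (J3 (3*k+5) : ℝ) = (2^(3*k+6) - 1)/7 := by
      rw [r5]; push_cast; rw [h4, h3, h2]; ring
    refine ⟨?_, ?_, ?_⟩
    · rw [show 3*(k+1) = 3*k+3 from by ring, h3]; try ring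
    · rw [show 3*(k+1)+1 = 3*k+4 from by ring, h4]; try ring
    · rw [show 3*(k+1)+2 = 3*k+5 from by ring, h5]; try ring

lemma j3_closed (k : ℕ) :
    ((j3 (3*k) : ℝ) = (2^(3*k+3) + 6)/7) ∧
    ((j3 (3*k+1) : ℝ) = (2^(3*k+4) - 9)/7) ∧
    ((j3 (3*k+2) : ℝ) = (2^(3*k+5) + 3)/7) := by
  induction k with
  | zero => norm_num [j3]
  | succ k ih =>
    obtain ⟨h0, h1, h2⟩ := ih
    have r3 : j3 (3*k+3) = j3 (3*k+2) + j3 (3*k+1) + 2 * j3 (3*k) := rfl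
    have r4 : j3 (3*k+4) = j3 (3*k+3) + j3 (3*k+2) + 2 * j3 (3*k+1) := rfl
    have r5 : j3 (3*k+5) = j3 (3*k+4) + j3 (3*k+3) + 2 * j3 (3*k+2) := rfl
    have h3 : (j3 (3*k+3) : ℝ) = (2^(3*k+6) + 6)/7 := by
      rw [r3]; push_cast; rw [h0, h1, h2]; ring
    have h4 : (j3 (3*k+4) : ℝ) = (2^(3*k+7) - 9)/7 := by
      rw [r4]; push_cast; rw [h3, h1, h2]; ring
    have h5 : (j3 (3*k+5) : ℝ) = (2^(3*k+8) + 3)/7 := by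
      rw [r5]; push_cast; rw [h4, h3, h2]; ring
    refine ⟨?_, ?_, ?_⟩
    · rw [show 3*(k+1) = 3*k+3 from by ring, h3]; try ring
    · rw [show 3*(k+1)+1 = 3*k+4 from by ring, h4]; try ring
    · rw [show 3*(k+1)+2 = 3*k+5 from by ring, h5]; try ring

open Octonion in
theorem JO_mul_jO (n : ℕ) (h : n % 3 = 0) :
    (49 : ℝ) • (JO n * jO n) =
      ((99 : ℝ) - 520 * 2 ^ n - 349488 * 4 ^ n) • e 0
      + ((2 : ℝ) ^ (2 * n + 6) + 7838 * 2 ^ n + 36) • e 1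
      + ((2 : ℝ) ^ (2 * n + 7) - 410 * 2 ^ n - 12) • e 2
      + ((2 : ℝ) ^ (2 * n + 8) + 4864 * 2 ^ n - 24) • e 3
      + ((2 : ℝ) ^ (2 * n + 9) + 3274 * 2 ^ n + 36) • e 4
      + ((2 : ℝ) ^ (2 * n + 10) + 850 * 2 ^ n - 12) • e 5
      + ((2 : ℝ) ^ (2 * n + 11) + 5424 * 2 ^ n - 24) • e 6
      + ((2 : ℝ) ^ (2 * n + 12) - 4426 * 2 ^ n + 36) • e 7 := by
  obtain ⟨k, rfl⟩ : ∃ k, n = 3 * k := ⟨n / 3, by omega⟩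
  obtain ⟨a0, a1, a2⟩ := J3_closed k
  have a3 : (J3 (3*k+3) : ℝ) = (2^(3*k+4) - 2)/7 := by
    rw [show 3*k+4 = 3*(k+1)+1 from by ring, show 3*k+3 = 3*(k+1) from by ring]
    exact (J3_closed (k+1)).1
  have a4 : (J3 (3*k+4) : ℝ) = (2^(3*k+5) + 3)/7 := by
    rw [show 3*k+5 = 3*(k+1)+2 from by ring, show 3*k+4 = 3*(k+1)+1 from by ring]
    exact (J3_closed (k+1)).2.1
  have a5 : (J3 (3*k+5) : ℝ) = (2^(3*k+6) - 1)/7 := by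
    rw [show 3*k+6 = 3*(k+1)+3 from by ring, show 3*k+5 = 3*(k+1)+2 from by ring]
    exact (J3_closed (k+1)).2.2
  have a6 : (J3 (3*k+6) : ℝ) = (2^(3*k+7) - 2)/7 := by
    rw [show 3*k+7 = 3*(k+2)+1 from by ring, show 3*k+6 = 3*(k+2) from by ring]
    exact (J3_closed (k+2)).1
  have a7 : (J3 (3*k+7) : ℝ) = (2^(3*k+8) + 3)/7 := by
    rw [show 3*k+8 = 3*(k+2)+2 from by ring, show 3*k+7 = 3*(k+2)+1 from by ring]
    exact (J3_closed (k+2)).2.1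
  obtain ⟨b0, b1, b2⟩ := j3_closed k
  have b3 : (j3 (3*k+3) : ℝ) = (2^(3*k+6) + 6)/7 := by
    rw [show 3*k+6 = 3*(k+1)+3 from by ring, show 3*k+3 = 3*(k+1) from by ring]
    exact (j3_closed (k+1)).1
  have b4 : (j3 (3*k+4) : ℝ) = (2^(3*k+7) - 9)/7 := by
    rw [show 3*k+7 = 3*(k+1)+4 from by ring, show 3*k+4 = 3*(k+1)+1 from by ring]
    exact (j3_closed (k+1)).2.1
  have b5 : (j3 (3*k+5) : ℝ) = (2^(3*k+8) + 3)/7 := by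
    rw [show 3*k+8 = 3*(k+1)+5 from by ring, show 3*k+5 = 3*(k+1)+2 from by ring]
    exact (j3_closed (k+1)).2.2
  have b6 : (j3 (3*k+6) : ℝ) = (2^(3*k+9) + 6)/7 := by
    rw [show 3*k+9 = 3*(k+2)+3 from by ring, show 3*k+6 = 3*(k+2) from by ring]
    exact (j3_closed (k+2)).1
  have b7 : (j3 (3*k+7) : ℝ) = (2^(3*k+10) - 9)/7 := by
    rw [show 3*k+10 = 3*(k+2)+4 from by ring, show 3*k+7 = 3*(k+2)+1 from by ring]
    exact (j3_closed (k+2)).2.1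
  have hJ : JO (3*k) =
      (((⟨(J3 (3*k) : ℝ), J3 (3*k+1), J3 (3*k+2), J3 (3*k+3)⟩ : ℍ[ℝ]),
        (⟨(J3 (3*k+4) : ℝ), J3 (3*k+5), J3 (3*k+6), J3 (3*k+7)⟩ : ℍ[ℝ])) : ℍ[ℝ] × ℍ[ℝ]) := by
    rw [JO, octo_sum_comb]
    norm_num [show ((3:Fin 8):ℕ) = 3 from rfl, show ((4:Fin 8):ℕ) = 4 from rfl,
      show ((5:Fin 8):ℕ) = 5 from rfl, show ((6:Fin 8):ℕ) = 6 from rfl,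
      show ((7:Fin 8):ℕ) = 7 from rfl]
    rfl
  have hj : jO (3*k) =
      (((⟨(j3 (3*k) : ℝ), j3 (3*k+1), j3 (3*k+2), j3 (3*k+3)⟩ : ℍ[ℝ]),
        (⟨(j3 (3*k+4) : ℝ), j3 (3*k+5), j3 (3*k+6), j3 (3*k+7)⟩ : ℍ[ℝ])) : ℍ[ℝ] × ℍ[ℝ]) := by
    rw [jO, octo_sum_comb]
    norm_num [show ((3:Fin 8):ℕ) = 3 from rfl, show ((4:Fin 8):ℕ) = 4 from rfl,
      show ((5:Fin 8):ℕ) = 5 from rfl, show ((6:Fin 8):ℕ) = 6 from rfl,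
      show ((7:Fin 8):ℕ) = 7 from rfl]
    rfl
  have hs : ∀ (r : ℝ) (p : Octonion), r • p = ((r • p.1, r • p.2) : ℍ[ℝ] × ℍ[ℝ]) :=
    fun _ _ => rfl
  have h4p : (4:ℝ) ^ (3*k) = 2 ^ (3*k) * 2 ^ (3*k) := by
    rw [show (4:ℝ) = 2 * 2 from by norm_num, mul_pow]
  have hf1 : ∀ (p q : Octonion), (p + q).1 = p.1 + q.1 := fun _ _ => rfl
  have hf2 : ∀ (p q : Octonion), (p + q).2 = p.2 + q.2 := fun _ _ => rfl
  have hm1 : ∀ (r : ℝ) (p : Octonion), (r • p).1 = r • p.1 := fun _ _ => rfl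
  have hm2 : ∀ (r : ℝ) (p : Octonion), (r • p).2 = r • p.2 := fun _ _ => rfl
  have hp1 : ∀ (p q : Octonion), (p * q).1 = p.1 * q.1 - star q.2 * p.2 := fun _ _ => rfl
  have hp2 : ∀ (p q : Octonion), (p * q).2 = q.2 * p.1 + p.2 * star q.1 := fun _ _ => rfl
  have cJ0 : (JO (3*k)).1.re = (J3 (3*k) : ℝ) :=
    congrArg (fun x : Octonion => x.1.re) hJ
  have cJ1 : (JO (3*k)).1.imI = (J3 (3*k+1) : ℝ) :=
    congrArg (fun x : Octonion => x.1.imI) hJ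
  have cJ2 : (JO (3*k)).1.imJ = (J3 (3*k+2) : ℝ) :=
    congrArg (fun x : Octonion => x.1.imJ) hJ
  have cJ3 : (JO (3*k)).1.imK = (J3 (3*k+3) : ℝ) :=
    congrArg (fun x : Octonion => x.1.imK) hJ
  have cJ4 : (JO (3*k)).2.re = (J3 (3*k+4) : ℝ) :=
    congrArg (fun x : Octonion => x.2.re) hJ
  have cJ5 : (JO (3*k)).2.imI = (J3 (3*k+5) : ℝ) :=
    congrArg (fun x : Octonion => x.2.imI) hJ
  have cJ6 : (JO (3*k)).2.imJ = (J3 (3*k+6) : ℝ) :=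
    congrArg (fun x : Octonion => x.2.imJ) hJ
  have cJ7 : (JO (3*k)).2.imK = (J3 (3*k+7) : ℝ) :=
    congrArg (fun x : Octonion => x.2.imK) hJ
  have cj0 : (jO (3*k)).1.re = (j3 (3*k) : ℝ) :=
    congrArg (fun x : Octonion => x.1.re) hj
  have cj1 : (jO (3*k)).1.imI = (j3 (3*k+1) : ℝ) :=
    congrArg (fun x : Octonion => x.1.imI) hj
  have cj2 : (jO (3*k)).1.imJ = (j3 (3*k+2) : ℝ) :=
    congrArg (fun x : Octonion => x.1.imJ) hj
  have cj3 : (jO (3*k)).1.imK = (j3 (3*k+3) : ℝ) :=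
    congrArg (fun x : Octonion => x.1.imK) hj
  have cj4 : (jO (3*k)).2.re = (j3 (3*k+4) : ℝ) :=
    congrArg (fun x : Octonion => x.2.re) hj
  have cj5 : (jO (3*k)).2.imI = (j3 (3*k+5) : ℝ) :=
    congrArg (fun x : Octonion => x.2.imI) hj
  have cj6 : (jO (3*k)).2.imJ = (j3 (3*k+6) : ℝ) :=
    congrArg (fun x : Octonion => x.2.imJ) hj
  have cj7 : (jO (3*k)).2.imK = (j3 (3*k+7) : ℝ) :=
    congrArg (fun x : Octonion => x.2.imK) hj
  refine Prod.ext (Quaternion.ext _ _ ?_ ?_ ?_ ?_) (Quaternion.ext _ _ ?_ ?_ ?_ ?_) <;>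
  · simp only [hf1, hf2, hm1, hm2, hp1, hp2, Quaternion.re_smul, Quaternion.imI_smul,
      Quaternion.imJ_smul, Quaternion.imK_smul, Quaternion.re_add, Quaternion.imI_add,
      Quaternion.imJ_add, Quaternion.imK_add, Quaternion.re_sub, Quaternion.imI_sub,
      Quaternion.imJ_sub, Quaternion.imK_sub, Quaternion.re_mul, Quaternion.imI_mul,
      Quaternion.imJ_mul, Quaternion.imK_mul, Quaternion.re_star, Quaternion.imI_star,
      Quaternion.imJ_star, Quaternion.imK_star, smul_eq_mul]
    simp only [cJ0, cJ1, cJ2, cJ3, cJ4, cJ5, cJ6, cJ7, cj0, cj1, cj2, cj3, cj4, cj5, cj6, cj7]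
    simp [e]
    simp only [a0, a1, a2, a3, a4, a5, a6, a7, b0, b1, b2, b3, b4, b5, b6, b7]
    norm_num [Quaternion.ext_iff, smul_eq_mul, h4p]
    ring
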